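/- Let k be a field, c a positive integer, and χ ∈ k[X] a polynomial. Then the c-th power of the Frobenius (companion) block F(χ(X^c)) is conjugate in GL over k to a block diagonal sum of c copies of F(χ): F(χ(X^c))^c ≅ F(χ)^{⊕c}. -/

import Mathlib

/-- The companion (Frobenius) matrix of a polynomial `χ`, of size `n` (intended
`n = deg χ`): 1's on the subdiagonal, last column given by minus the coefficients
of `χ`. It is the matrix of multiplication by `X` on `k[X]/(χ)`. -/
def companionMatrix {k : Type} [Field k] (n : ℕ) (χ : Polynomial k) :
    Matrix (Fin n) (Fin n) k :=
  Matrix.of fun i j =>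
    if (j : ℕ) + 1 = n then -χ.coeff i
    else if (i : ℕ) = (j : ℕ) + 1 then 1 else 0

/-- Auxiliary: the matrix of multiplication by `X^t` on `k[X]/(χ(X^c))`, valid for `t ≤ c`. -/
def auxM {k : Type} [Field k] (χ : Polynomial k) (c t : ℕ) :
    Matrix (Fin (χ.natDegree * c)) (Fin (χ.natDegree * c)) k :=
  Matrix.of fun p q =>
    if (q : ℕ) + t < χ.natDegree * c then (if (p : ℕ) = (q : ℕ) + t then 1 else 0)
    else if ((q : ℕ) + t - χ.natDegree * c ≤ (p : ℕ) ∧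
        c ∣ ((p : ℕ) - ((q : ℕ) + t - χ.natDegree * c))) then
      -χ.coeff (((p : ℕ) - ((q : ℕ) + t - χ.natDegree * c)) / c)
    else 0

lemma coeff_comp_X_pow {k : Type} [Field k] (χ : Polynomial k) {c : ℕ} (hc : 0 < c) (n : ℕ) :
    (χ.comp (Polynomial.X ^ c)).coeff n = if c ∣ n then χ.coeff (n / c) else 0 := by
  rw [← Polynomial.expand_eq_comp_X_pow, Polynomial.coeff_expand hc]

lemma dvd_add_lt {d c r t : ℕ} (hr : r < d * c) (hdvd : c ∣ r) (ht : t < c) :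
    r + t < d * c := by
  obtain ⟨m, hm⟩ := hdvd
  subst hm
  have hc : 0 < c := lt_of_le_of_lt (Nat.zero_le t) ht
  have hm' : m + 1 ≤ d := by
    by_contra h
    push_neg at h
    have h1 : d * c ≤ m * c := Nat.mul_le_mul_right c (by omega)
    have h2 : c * m = m * c := mul_comm _ _
    omega
  calc c * m + t < c * m + c := by omega
    _ = c * (m + 1) := by ring
    _ ≤ c * d := Nat.mul_le_mul_left c hm'
    _ = d * c := mul_comm _ _

lemma pred_mul_add {d c : ℕ} (hd : 0 < d) : c * (d - 1) + c = d * c := by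
  cases d with
  | zero => omega
  | succ d' =>
      have : d' + 1 - 1 = d' := rfl
      rw [this, Nat.succ_mul, mul_comm]

lemma auxM_pow {k : Type} [Field k] (χ : Polynomial k) (hd : 0 < χ.natDegree)
    {c : ℕ} (hc : 0 < c) {t : ℕ} (ht : t ≤ c) :
    (companionMatrix (χ.natDegree * c) (χ.comp (Polynomial.X ^ c))) ^ t = auxM χ c t := by
  induction t with
  | zero =>
      ext p q
      have hq : (q : ℕ) + 0 < χ.natDegree * c := by omega
      simp [auxM, hq, Matrix.one_apply, Fin.ext_iff, eq_comm]
  | succ t ih =>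
      have ht' : t < c := Nat.lt_of_succ_le ht
      rw [pow_succ, ih (le_of_lt ht')]
      ext p q
      have hpN := p.isLt
      have hqN := q.isLt
      rw [Matrix.mul_apply]
      by_cases hq : (q : ℕ) + 1 = χ.natDegree * c
      · -- last column of the companion matrix
        have hcol : ∀ r : Fin (χ.natDegree * c),
            companionMatrix (χ.natDegree * c) (χ.comp (Polynomial.X ^ c)) r q =
            -(if c ∣ (r : ℕ) then χ.coeff ((r : ℕ) / c) else 0) := by
          intro r
          simp [companionMatrix, hq, coeff_comp_X_pow χ hc]
        simp only [hcol]
        have h1 : ¬ ((q : ℕ) + (t + 1) < χ.natDegree * c) := by omega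
        have h2 : (q : ℕ) + (t + 1) - χ.natDegree * c = t := by omega
        have hval : auxM χ c (t + 1) p q =
            if t ≤ (p : ℕ) ∧ c ∣ ((p : ℕ) - t) then -χ.coeff (((p : ℕ) - t) / c) else 0 := by
          simp only [auxM, Matrix.of_apply, h2]
          rw [if_neg h1]
        rw [hval]
        by_cases hp : t ≤ (p : ℕ) ∧ c ∣ ((p : ℕ) - t)
        · rw [if_pos hp]
          obtain ⟨hp1, hp2⟩ := hp
          have hplt : (p : ℕ) - t < χ.natDegree * c := by omega
          rw [Finset.sum_eq_single (⟨(p : ℕ) - t, hplt⟩ : Fin (χ.natDegree * c))]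
          · have hlt : ((p : ℕ) - t) + t < χ.natDegree * c := by omega
            have heq : (p : ℕ) = ((p : ℕ) - t) + t := by omega
            simp only [auxM, Matrix.of_apply, Fin.val_mk]
            rw [if_pos hlt, if_pos heq, if_pos hp2, one_mul]
          · intro r _ hr
            by_cases hdvd : c ∣ (r : ℕ)
            · have hrt : (r : ℕ) + t < χ.natDegree * c := dvd_add_lt r.isLt hdvd ht'
              simp only [auxM, Matrix.of_apply]
              rw [if_pos hrt]
              have hne : (p : ℕ) ≠ (r : ℕ) + t := by
                intro h
                exact hr (Fin.ext (by simp only [Fin.val_mk]; omega))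
              rw [if_neg hne, zero_mul]
            · rw [if_neg hdvd, neg_zero, mul_zero]
          · intro h; exact absurd (Finset.mem_univ _) h
        · rw [if_neg hp]
          apply Finset.sum_eq_zero
          intro r _
          by_cases hdvd : c ∣ (r : ℕ)
          · have hrt : (r : ℕ) + t < χ.natDegree * c := dvd_add_lt r.isLt hdvd ht'
            simp only [auxM, Matrix.of_apply]
            rw [if_pos hrt]
            have hne : (p : ℕ) ≠ (r : ℕ) + t := by
              intro h
              apply hp
              refine ⟨by omega, ?_⟩
              have : (p : ℕ) - t = (r : ℕ) := by omega
              rw [this]; exact hdvd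
            rw [if_neg hne, zero_mul]
          · rw [if_neg hdvd, neg_zero, mul_zero]
      · -- ordinary column: q+1 < N
        have hq' : (q : ℕ) + 1 < χ.natDegree * c := by omega
        have hcol : ∀ r : Fin (χ.natDegree * c),
            companionMatrix (χ.natDegree * c) (χ.comp (Polynomial.X ^ c)) r q =
            if (r : ℕ) = (q : ℕ) + 1 then 1 else 0 := by
          intro r; simp [companionMatrix, hq]
        simp only [hcol]
        have hsum : ∑ r : Fin (χ.natDegree * c),
            auxM χ c t p r * (if (r : ℕ) = (q : ℕ) + 1 then 1 else 0)
            = auxM χ c t p ⟨(q : ℕ) + 1, hq'⟩ := by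
          rw [Finset.sum_eq_single (⟨(q : ℕ) + 1, hq'⟩ : Fin (χ.natDegree * c))]
          · simp
          · intro r _ hr
            have : (r : ℕ) ≠ (q : ℕ) + 1 := fun h => hr (Fin.ext h)
            rw [if_neg this, mul_zero]
          · intro h; exact absurd (Finset.mem_univ _) h
        rw [hsum]
        simp only [auxM, Matrix.of_apply, Fin.val_mk]
        have harith : (q : ℕ) + 1 + t = (q : ℕ) + (t + 1) := by omega
        rw [harith]

theorem companion_pow_similar_blockDiagonal
    (k : Type) [Field k] (χ : Polynomial k) (hχ : χ.Monic) (hd : 0 < χ.natDegree)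
    (c : ℕ) (hc : 0 < c) :
    ∃ P : (Matrix (Fin (χ.natDegree * c)) (Fin (χ.natDegree * c)) k)ˣ,
      (P : Matrix (Fin (χ.natDegree * c)) (Fin (χ.natDegree * c)) k) *
          (companionMatrix (χ.natDegree * c) (χ.comp (Polynomial.X ^ c))) ^ c *
          (↑P⁻¹ : Matrix (Fin (χ.natDegree * c)) (Fin (χ.natDegree * c)) k) =
        Matrix.reindex finProdFinEquiv finProdFinEquiv
          (Matrix.blockDiagonal fun _ : Fin c => companionMatrix χ.natDegree χ) := by
  refine ⟨1, ?_⟩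
  rw [inv_one, Units.val_one, one_mul, mul_one]
  rw [auxM_pow χ hd hc le_rfl]
  ext p q
  have hpN := p.isLt
  have hqN := q.isLt
  have hNc := pred_mul_add (d := χ.natDegree) (c := c) hd
  rw [Matrix.reindex_apply, Matrix.submatrix_apply, Matrix.blockDiagonal_apply]
  simp only [finProdFinEquiv_symm_apply, Fin.coe_divNat, Fin.coe_modNat]
  have hpc : (p : ℕ) % c < c := Nat.mod_lt _ hc
  have hqc : (q : ℕ) % c < c := Nat.mod_lt _ hc
  have hpm : (p : ℕ) = c * ((p : ℕ) / c) + (p : ℕ) % c := by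
    rw [Nat.div_add_mod]
  have hqm : (q : ℕ) = c * ((q : ℕ) / c) + (q : ℕ) % c := by
    rw [Nat.div_add_mod]
  by_cases hmid : (q : ℕ) + c < χ.natDegree * c
  · -- q / c + 1 < d
    have hqd' : (q : ℕ) / c + 1 ≠ χ.natDegree := by
      intro h
      have h1 : (q : ℕ) / c = χ.natDegree - 1 := by omega
      rw [h1] at hqm
      omega
    simp only [auxM, Matrix.of_apply, if_pos hmid]
    by_cases heq : (p : ℕ) = (q : ℕ) + c
    · rw [if_pos heq]
      have h1 : (p : ℕ) % c = (q : ℕ) % c := by rw [heq, Nat.add_mod_right]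
      have h2 : (p : ℕ) / c = (q : ℕ) / c + 1 := by
        rw [heq, Nat.add_div_right _ hc]
      rw [if_pos (Fin.ext h1 : (Fin.modNat p) = Fin.modNat q)]
      · simp only [companionMatrix, Matrix.of_apply]
        rw [Fin.coe_divNat, Fin.coe_divNat]
        rw [if_neg hqd', if_pos h2]
    · rw [if_neg heq]
      by_cases hmod : (p : ℕ) % c = (q : ℕ) % c
      · rw [if_pos (Fin.ext hmod : (Fin.modNat p) = Fin.modNat q)]
        simp only [companionMatrix, Matrix.of_apply]
        rw [Fin.coe_divNat, Fin.coe_divNat]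
        rw [if_neg hqd', if_neg ?_]
        intro h
        apply heq
        rw [hpm, hqm, h, hmod]; ring
      · rw [if_neg (by simpa [Fin.ext_iff] using hmod)]
  · -- q + c ≥ N : q / c = d - 1
    have hqd' : (q : ℕ) / c + 1 = χ.natDegree := by
      have hge : c * (χ.natDegree - 1) ≤ (q : ℕ) := by omega
      have h1 : χ.natDegree - 1 ≤ (q : ℕ) / c :=
        (Nat.le_div_iff_mul_le hc).mpr (by rw [mul_comm]; exact hge)
      have h2 : (q : ℕ) / c < χ.natDegree :=
        (Nat.div_lt_iff_lt_mul hc).mpr hqN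
      omega
    have hsub : (q : ℕ) + c - χ.natDegree * c = (q : ℕ) % c := by
      have : c * ((q : ℕ) / c) = c * (χ.natDegree - 1) := by
        rw [show (q : ℕ) / c = χ.natDegree - 1 by omega]
      omega
    simp only [auxM, Matrix.of_apply, hsub]
    rw [if_neg hmid]
    by_cases hmod : (p : ℕ) % c = (q : ℕ) % c
    · have hcond : (q : ℕ) % c ≤ (p : ℕ) ∧ c ∣ ((p : ℕ) - (q : ℕ) % c) := by
        refine ⟨by omega, ⟨(p : ℕ) / c, by omega⟩⟩
      rw [if_pos hcond]
      have hdiv : ((p : ℕ) - (q : ℕ) % c) / c = (p : ℕ) / c := by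
        have h : (p : ℕ) - (q : ℕ) % c = c * ((p : ℕ) / c) := by omega
        rw [h, Nat.mul_div_cancel_left _ hc]
      rw [hdiv]
      rw [if_pos (Fin.ext hmod : (Fin.modNat p) = Fin.modNat q)]
      simp only [companionMatrix, Matrix.of_apply]
      rw [Fin.coe_divNat, Fin.coe_divNat]
      rw [if_pos hqd']
    · have hnot : ¬ ((q : ℕ) % c ≤ (p : ℕ) ∧ c ∣ ((p : ℕ) - (q : ℕ) % c)) := by
        rintro ⟨h1, m, h2⟩
        apply hmod
        have h3 : (p : ℕ) = c * m + (q : ℕ) % c := by omega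
        rw [h3, Nat.mul_add_mod, Nat.mod_eq_of_lt hqc]
      rw [if_neg hnot,
        if_neg (show ¬ (Fin.modNat p = Fin.modNat q) by simpa [Fin.ext_iff] using hmod)]
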